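/- Let $d$ denote the hyperbolic distance on $\mathbb{H}^N$ and on $\mathbb{H}^\infty$, and for $0 < t \le 1$ let $f_t : \mathbb{H}^N \to \mathbb{H}^\infty$ be any map satisfying $(\cosh d(x,y))^t = \cosh d(f_t(x), f_t(y))$ for all $x,y$. Then for all $x, y \in \mathbb{H}^N$: $t\, d(x,y) \le d(f_t(x), f_t(y)) \le \min(t\, d(x,y) + \ln 2,\ d(x,y))$. In particular $f_t$ is a $(t, \ln 2)$-quasi-isometric embedding. -/
import Mathlib

lemma cosh_mul_le_rpow {t u : ℝ} (ht0 : 0 ≤ t) (ht1 : t ≤ 1) (_hu : 0 ≤ u) :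
    Real.cosh (t * u) ≤ Real.cosh u ^ t := by
  have h := (Real.concaveOn_rpow ht0 ht1).2 (Set.mem_Ici.2 (Real.exp_pos u).le)
    (Set.mem_Ici.2 (Real.exp_pos (-u)).le) (by norm_num : (0:ℝ) ≤ 1/2)
    (by norm_num : (0:ℝ) ≤ 1/2) (by norm_num)
  simp only [smul_eq_mul] at h
  have he : Real.exp u ^ t = Real.exp (t * u) := by
    rw [mul_comm, Real.exp_mul]
  have he' : Real.exp (-u) ^ t = Real.exp (t * (-u)) := by
    rw [mul_comm, Real.exp_mul]
  calc Real.cosh (t * u) = 1/2 * Real.exp u ^ t + 1/2 * Real.exp (-u) ^ t := by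
        rw [he, he', Real.cosh_eq, mul_neg]; ring
    _ ≤ (1/2 * Real.exp u + 1/2 * Real.exp (-u)) ^ t := h
    _ = Real.cosh u ^ t := by rw [Real.cosh_eq]; ring_nf

lemma exp_le_cosh_add_log_two (w : ℝ) : Real.exp w ≤ Real.cosh (w + Real.log 2) := by
  rw [Real.cosh_eq, Real.exp_add, Real.exp_log (by norm_num : (0:ℝ) < 2)]
  nlinarith [Real.exp_pos (-(w + Real.log 2)), Real.exp_pos w]

/-- If `f : ℍ^N → ℍ^∞` satisfies `(cosh d(x,y))^t = cosh d(f x, f y)` for `0 < t ≤ 1`,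
then for all `x y`: `t d(x,y) ≤ d(f x, f y) ≤ min (t d(x,y) + log 2) (d(x,y))`.
In particular `f` is a quasi-isometric embedding with multiplicative constant `t` and
additive constant `log 2`. The hyperbolic spaces are represented as abstract metric spaces. -/
theorem stmt_0 {HN Hinf : Type*} [MetricSpace HN] [MetricSpace Hinf]
    (t : ℝ) (ht0 : 0 < t) (ht1 : t ≤ 1) (f : HN → Hinf)
    (hf : ∀ x y : HN, Real.cosh (dist x y) ^ t = Real.cosh (dist (f x) (f y))) :
    ∀ x y : HN,
      t * dist x y ≤ dist (f x) (f y) ∧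
      dist (f x) (f y) ≤ min (t * dist x y + Real.log 2) (dist x y) := by
  intro x y
  set u := dist x y with hu
  set v := dist (f x) (f y) with hv
  have hu0 : 0 ≤ u := dist_nonneg
  have hv0 : 0 ≤ v := dist_nonneg
  have key : Real.cosh u ^ t = Real.cosh v := hf x y
  have lower : t * u ≤ v := by
    have h1 : Real.cosh (t * u) ≤ Real.cosh v :=
      key ▸ cosh_mul_le_rpow ht0.le ht1 hu0
    have := Real.cosh_le_cosh.1 h1
    rwa [abs_of_nonneg (by positivity), abs_of_nonneg hv0] at this
  refine ⟨lower, le_min ?_ ?_⟩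
  · have h2 : Real.cosh v ≤ Real.cosh (t * u + Real.log 2) := by
      rw [← key]
      calc Real.cosh u ^ t ≤ Real.exp u ^ t := by
            apply Real.rpow_le_rpow ((Real.cosh_pos _).le) _ ht0.le
            rw [Real.cosh_eq]
            nlinarith [Real.exp_pos u, Real.exp_le_exp.2 (neg_le_self hu0)]
        _ = Real.exp (t * u) := by rw [mul_comm, Real.exp_mul]
        _ ≤ Real.cosh (t * u + Real.log 2) := exp_le_cosh_add_log_two _
    have := Real.cosh_le_cosh.1 h2
    have hpos : 0 ≤ t * u + Real.log 2 := by
      have : (0:ℝ) ≤ Real.log 2 := Real.log_nonneg (by norm_num)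
      positivity
    rwa [abs_of_nonneg hv0, abs_of_nonneg hpos] at this
  · have h3 : Real.cosh v ≤ Real.cosh u := by
      rw [← key]
      calc Real.cosh u ^ t ≤ Real.cosh u ^ (1:ℝ) :=
            Real.rpow_le_rpow_of_exponent_le (Real.one_le_cosh u) ht1
        _ = Real.cosh u := Real.rpow_one _
    have := Real.cosh_le_cosh.1 h3
    rwa [abs_of_nonneg hv0, abs_of_nonneg hu0] at this
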